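/- For positive reals a, b with a ≠ b, the identric mean I(a,b) = (1/e)(b^b/a^a)^(1/(b-a)) is strictly less than the arithmetic mean (a+b)/2. -/

import Mathlib

open Real Set

lemma key_ineq (a b : ℝ) (ha : 0 < a) (hab : a < b) :
    b * Real.log b - a * Real.log a + (a - b) < (b - a) * Real.log ((a + b) / 2) := by
  set f : ℝ → ℝ := fun x =>
    (x - a) * Real.log ((a + x) / 2) - x * Real.log x + a * Real.log a + (x - a) with hf
  have hderiv : ∀ x ∈ interior (Set.Ici a), 0 < a → HasDerivAt f
      (Real.log ((a + x) / 2) - Real.log x + (x - a) / (a + x)) x := by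
    intro x hx _
    rw [interior_Ici] at hx
    have hxa : a < x := hx
    have hx0 : 0 < x := lt_trans ha hxa
    have hm0 : 0 < (a + x) / 2 := by linarith
    have h1 : HasDerivAt (fun x : ℝ => (a + x) / 2) (1 / 2) x := by
      simpa using ((hasDerivAt_id x).const_add a).div_const 2
    have h2 : HasDerivAt (fun x : ℝ => Real.log ((a + x) / 2)) (1 / (a + x)) x := by
      have := (Real.hasDerivAt_log hm0.ne').comp x h1
      exact this.congr_deriv (by field_simp)
    have h3 : HasDerivAt (fun x : ℝ => (x - a) * Real.log ((a + x) / 2))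
        (Real.log ((a + x) / 2) + (x - a) * (1 / (a + x))) x := by
      have := ((hasDerivAt_id x).sub_const a).mul h2
      exact this.congr_deriv (by simp)
    have h4 : HasDerivAt (fun x : ℝ => x * Real.log x) (Real.log x + 1) x :=
      Real.hasDerivAt_mul_log hx0.ne'
    have h5 : HasDerivAt f
        ((Real.log ((a + x) / 2) + (x - a) * (1 / (a + x))) - (Real.log x + 1) + 1) x := by
      exact ((h3.sub h4).add_const (a * Real.log a)).add
        (((hasDerivAt_id x).sub_const a))
    convert h5 using 1
    field_simp
    ring
  have hcont : ContinuousOn f (Set.Ici a) := by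
    apply ContinuousOn.add
    apply ContinuousOn.add
    apply ContinuousOn.sub
    · apply ContinuousOn.mul (by fun_prop)
      apply ContinuousOn.log (by fun_prop)
      intro x hx
      have hax : a ≤ x := hx
      linarith
    · apply ContinuousOn.mul (by fun_prop)
      apply ContinuousOn.log (by fun_prop)
      intro x hx
      have : a ≤ x := hx
      have : 0 < x := lt_of_lt_of_le ha this
      positivity
    · fun_prop
    · fun_prop
  have hmono : StrictMonoOn f (Set.Ici a) := by
    apply strictMonoOn_of_deriv_pos (convex_Ici a) hcont
    intro x hx
    have hd := hderiv x hx ha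
    rw [hd.deriv]
    rw [interior_Ici] at hx
    have hxa : a < x := hx
    have hx0 : 0 < x := lt_trans ha hxa
    have hm0 : 0 < (a + x) / 2 := by linarith
    have hne : x / ((a + x) / 2) ≠ 1 := by
      intro h
      rw [div_eq_one_iff_eq hm0.ne'] at h
      linarith
    have hlt : Real.log (x / ((a + x) / 2)) < x / ((a + x) / 2) - 1 :=
      Real.log_lt_sub_one_of_pos (by positivity) hne
    rw [Real.log_div hx0.ne' hm0.ne'] at hlt
    have hval : x / ((a + x) / 2) - 1 = (x - a) / (a + x) := by
      field_simp
      ring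
    rw [hval] at hlt
    linarith
  have h0 : f a = 0 := by
    simp [hf]
  have hfb : 0 < f b := by
    rw [← h0]
    exact hmono (Set.self_mem_Ici) (Set.mem_Ici.mpr hab.le) hab
  simp only [hf] at hfb
  linarith

lemma main_lt (a b : ℝ) (ha : 0 < a) (hb : 0 < b) (hab : a < b) :
    (1 / Real.exp 1) * (b ^ b / a ^ a) ^ (1 / (b - a)) < (a + b) / 2 := by
  have hba : 0 < b - a := by linarith
  have hbb : (0:ℝ) < b ^ b := Real.rpow_pos_of_pos hb b
  have haa : (0:ℝ) < a ^ a := Real.rpow_pos_of_pos ha a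
  have hq : (0:ℝ) < b ^ b / a ^ a := div_pos hbb haa
  have hlogq : Real.log (b ^ b / a ^ a) = b * Real.log b - a * Real.log a := by
    rw [Real.log_div hbb.ne' haa.ne', Real.log_rpow hb, Real.log_rpow ha]
  have hL : (1 / Real.exp 1) * (b ^ b / a ^ a) ^ (1 / (b - a)) =
      Real.exp ((b * Real.log b - a * Real.log a) / (b - a) - 1) := by
    rw [Real.rpow_def_of_pos hq, hlogq, Real.exp_sub]
    rw [one_div_mul_eq_div, mul_comm]
    congr 1
    field_simp
  have hm : (0:ℝ) < (a + b) / 2 := by linarith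
  rw [hL, ← Real.exp_log hm]
  apply Real.exp_lt_exp.mpr
  have hk := key_ineq a b ha hab
  rw [div_sub_one hba.ne', div_lt_iff₀ hba]
  linarith

theorem identric_lt_arithmetic_mean (a b : ℝ) (ha : 0 < a) (hb : 0 < b) (hab : a ≠ b) :
    (1 / Real.exp 1) * (b ^ b / a ^ a) ^ (1 / (b - a)) < (a + b) / 2 := by
  rcases lt_or_gt_of_ne hab with h | h
  · exact main_lt a b ha hb h
  · have hsym : (b ^ b / a ^ a : ℝ) ^ (1 / (b - a)) = (a ^ a / b ^ b) ^ (1 / (a - b)) := by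
      have hbb : (0:ℝ) < b ^ b := Real.rpow_pos_of_pos hb b
      have haa : (0:ℝ) < a ^ a := Real.rpow_pos_of_pos ha a
      have h1 : (1:ℝ) / (b - a) = -(1 / (a - b)) := by
        rw [one_div, one_div, ← inv_neg, neg_sub]
      rw [h1, Real.rpow_neg (by positivity), ← Real.inv_rpow (by positivity),
        inv_div]
    rw [hsym, add_comm a b]
    exact main_lt b a hb ha h
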